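/- Let F : R^d ⇉ R^d be a set-valued mapping whose graph is a union of finitely many polyhedral convex sets (piecewise polyhedral). Then there exists a constant κ > 0 such that for every x ∈ R^d, F is locally upper Lipschitz continuous at x with modulus κ: there is a neighborhood U of x with F(y) ⊆ F(x) + κ‖y − x‖·B_d for all y ∈ U, where B_d is the closed unit ball. -/

import Mathlib

/-- A polyhedral convex set: a finite intersection of closed halfspaces. -/
def IsPolyhedron {E : Type*} [NormedAddCommGroup E] [NormedSpace ℝ E] (S : Set E) : Prop :=
  ∃ (k : ℕ) (f : Fin k → (E →ₗ[ℝ] ℝ)) (c : Fin k → ℝ), S = {x | ∀ i, f i x ≤ c i}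
open Finset

namespace RobinsonAux

/-- dot product -/
def dot {m : ℕ} (a y : Fin m → ℝ) : ℝ := ∑ j, a j * y j

lemma abs_dot_sub_dot_le {m : ℕ} (a y y' : Fin m → ℝ) :
    |dot a y - dot a y'| ≤ (∑ j, |a j|) * ‖y - y'‖ := by
  have h : dot a y - dot a y' = ∑ j, a j * (y j - y' j) := by
    simp [dot, mul_sub, Finset.sum_sub_distrib]
  rw [h, Finset.sum_mul]
  refine (Finset.abs_sum_le_sum_abs _ _).trans (Finset.sum_le_sum fun j _ => ?_)
  rw [abs_mul]
  refine mul_le_mul_of_nonneg_left ?_ (abs_nonneg _)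
  have := norm_le_pi_norm (y - y') j
  simpa [Real.norm_eq_abs] using this

/-- 1-D feasibility from sign conditions and pairwise compatibility -/
lemma onedim_feasible {ι : Type*} [Fintype ι] (β r : ι → ℝ)
    (h0 : ∀ i, β i = 0 → 0 ≤ r i)
    (hpair : ∀ i j, 0 < β i → β j < 0 → β j * r i ≤ β i * r j) :
    ∃ t, ∀ i, β i * t ≤ r i := by
  classical
  by_cases hN : (Finset.univ.filter (fun j => β j < 0)).Nonempty
  · refine ⟨(Finset.univ.filter (fun j => β j < 0)).sup' hN (fun j => r j / β j), fun i => ?_⟩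
    rcases lt_trichotomy (β i) 0 with hi | hi | hi
    · have hmem : i ∈ Finset.univ.filter (fun j => β j < 0) := by simp [hi]
      have hle := Finset.le_sup' (fun j => r j / β j) hmem
      have hne : β i ≠ 0 := ne_of_lt hi
      have := mul_le_mul_of_nonpos_left hle (le_of_lt hi)
      calc β i * _ ≤ β i * (r i / β i) := this
        _ = r i := by field_simp
    · simpa [hi] using h0 i hi
    · have hub : ∀ j ∈ Finset.univ.filter (fun j => β j < 0), r j / β j ≤ r i / β i := by
        intro j hj
        have hj' : β j < 0 := (Finset.mem_filter.1 hj).2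
        have hp := hpair i j hi hj'
        have hi0 : β i ≠ 0 := ne_of_gt hi
        have hj0 : β j ≠ 0 := ne_of_lt hj'
        have hprod : β i * β j < 0 := mul_neg_of_pos_of_neg hi hj'
        by_contra hcon
        push_neg at hcon
        have := mul_lt_mul_of_neg_left hcon hprod
        have e1 : β i * β j * (r i / β i) = β j * r i := by field_simp
        have e2 : β i * β j * (r j / β j) = β i * r j := by field_simp
        rw [e1, e2] at this
        linarith
      have hle := Finset.sup'_le hN (fun j => r j / β j) hub
      have hne : β i ≠ 0 := ne_of_gt hi
      have := mul_le_mul_of_nonneg_left hle (le_of_lt hi)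
      calc β i * _ ≤ β i * (r i / β i) := this
        _ = r i := by field_simp
  · by_cases hPp : (Finset.univ.filter (fun j => 0 < β j)).Nonempty
    · refine ⟨(Finset.univ.filter (fun j => 0 < β j)).inf' hPp (fun j => r j / β j), fun i => ?_⟩
      rcases lt_trichotomy (β i) 0 with hi | hi | hi
      · exact absurd ⟨i, by simp [hi]⟩ hN
      · simpa [hi] using h0 i hi
      · have hmem : i ∈ Finset.univ.filter (fun j => 0 < β j) := by simp [hi]
        have hle := Finset.inf'_le (fun j => r j / β j) hmem
        have hne : β i ≠ 0 := ne_of_gt hi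
        have := mul_le_mul_of_nonneg_left hle (le_of_lt hi)
        calc β i * _ ≤ β i * (r i / β i) := this
          _ = r i := by field_simp
    · refine ⟨0, fun i => ?_⟩
      rcases lt_trichotomy (β i) 0 with hi | hi | hi
      · exact absurd ⟨i, by simp [hi]⟩ hN
      · simpa [hi] using h0 i hi
      · exact absurd ⟨i, by simp [hi]⟩ hPp





/-- 1-D Hoffman: approximate feasibility gives a nearby feasible point. -/
lemma onedim_hoffman {ι : Type*} [Fintype ι] (β : ι → ℝ) :
    ∃ c > (0:ℝ), ∀ (r : ι → ℝ) (t ε : ℝ), 0 ≤ ε →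
      (∃ t₀, ∀ i, β i * t₀ ≤ r i) → (∀ i, β i * t ≤ r i + ε) →
      ∃ t', (∀ i, β i * t' ≤ r i) ∧ |t' - t| ≤ c * ε := by
  classical
  obtain ⟨mp, hmpdef⟩ : ∃ mp : ℝ, mp = ∑ i, if 0 < β i then 1 / β i else 0 := ⟨_, rfl⟩
  obtain ⟨mn, hmndef⟩ : ∃ mn : ℝ, mn = ∑ i, if β i < 0 then -(1 / β i) else 0 := ⟨_, rfl⟩
  have hptermnn : ∀ j, 0 ≤ if 0 < β j then 1 / β j else 0 := by
    intro j
    split_ifs with h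
    · exact (one_div_nonneg).2 h.le
    · exact le_refl 0
  have hntermnn : ∀ j, 0 ≤ if β j < 0 then -(1 / β j) else 0 := by
    intro j
    split_ifs with h
    · rw [le_neg]
      simpa using (div_nonpos_of_nonneg_of_nonpos zero_le_one h.le)
    · exact le_refl 0
  have hmp0 : 0 ≤ mp := hmpdef ▸ Finset.sum_nonneg fun j _ => hptermnn j
  have hmn0 : 0 ≤ mn := hmndef ▸ Finset.sum_nonneg fun j _ => hntermnn j
  have hkeyp : ∀ i, 0 < β i → 1 ≤ β i * mp := by
    intro i hi
    have h1 : (1 / β i) ≤ mp := by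
      have := Finset.single_le_sum (f := fun j => if 0 < β j then 1 / β j else 0)
        (fun j _ => hptermnn j) (Finset.mem_univ i)
      rw [if_pos hi] at this
      exact hmpdef ▸ this
    have := mul_le_mul_of_nonneg_left h1 hi.le
    calc (1:ℝ) = β i * (1 / β i) := by field_simp
      _ ≤ β i * mp := this
  have hkeyn : ∀ i, β i < 0 → 1 ≤ (-β i) * mn := by
    intro i hi
    have h1 : (-(1 / β i)) ≤ mn := by
      have := Finset.single_le_sum (f := fun j => if β j < 0 then -(1 / β j) else 0)
        (fun j _ => hntermnn j) (Finset.mem_univ i)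
      rw [if_pos hi] at this
      exact hmndef ▸ this
    have hb : (0:ℝ) ≤ -β i := by linarith
    have := mul_le_mul_of_nonneg_left h1 hb
    have hne : β i ≠ 0 := ne_of_lt hi
    calc (1:ℝ) = -β i * -(1 / β i) := by field_simp
      _ ≤ -β i * mn := this
  refine ⟨1 + mp + mn, by linarith, fun r t ε hε ⟨t₀, ht₀⟩ hres => ?_⟩
  rcases le_total t₀ t with hcase | hcase
  · refine ⟨max t₀ (t - ε * mp), fun i => ?_, ?_⟩
    · rcases lt_trichotomy (β i) 0 with hi | hi | hi
      · calc β i * max t₀ (t - ε * mp) ≤ β i * t₀ :=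
            mul_le_mul_of_nonpos_left (le_max_left _ _) hi.le
          _ ≤ r i := ht₀ i
      · simpa [hi] using ht₀ i
      · rcases max_cases t₀ (t - ε * mp) with ⟨heq, -⟩ | ⟨heq, -⟩ <;> rw [heq]
        · exact ht₀ i
        · have h1 := hres i
          have h2 : ε * 1 ≤ ε * (β i * mp) := mul_le_mul_of_nonneg_left (hkeyp i hi) hε
          nlinarith
    · have hub : max t₀ (t - ε * mp) ≤ t :=
        max_le hcase (by nlinarith [mul_nonneg hε hmp0])
      have hlb : t - ε * mp ≤ max t₀ (t - ε * mp) := le_max_right _ _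
      rw [abs_le]
      constructor
      · nlinarith [mul_nonneg hε hmn0, hε]
      · nlinarith [mul_nonneg hε hmp0, mul_nonneg hε hmn0, hε]
  · refine ⟨min t₀ (t + ε * mn), fun i => ?_, ?_⟩
    · rcases lt_trichotomy (β i) 0 with hi | hi | hi
      · rcases min_cases t₀ (t + ε * mn) with ⟨heq, -⟩ | ⟨heq, -⟩ <;> rw [heq]
        · exact ht₀ i
        · have h1 := hres i
          have h2 : ε * 1 ≤ ε * (-β i * mn) := mul_le_mul_of_nonneg_left (hkeyn i hi) hε
          nlinarith
      · simpa [hi] using ht₀ i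
      · calc β i * min t₀ (t + ε * mn) ≤ β i * t₀ :=
            mul_le_mul_of_nonneg_left (min_le_left _ _) hi.le
          _ ≤ r i := ht₀ i
    · have hlb : t ≤ min t₀ (t + ε * mn) :=
        le_min hcase (by nlinarith [mul_nonneg hε hmn0])
      have hub : min t₀ (t + ε * mn) ≤ t + ε * mn := min_le_right _ _
      rw [abs_le]
      constructor
      · nlinarith [mul_nonneg hε hmp0, mul_nonneg hε hmn0, hε]
      · nlinarith [mul_nonneg hε hmp0, hε]







/-- index type for the Fourier–Motzkin eliminated system -/
def elimIdx (ι : Type) (β : ι → ℝ) : Type :=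
  {i : ι // β i = 0} ⊕ ({i : ι // 0 < β i} × {j : ι // β j < 0})

instance elimIdx.finite (ι : Type) (β : ι → ℝ) [Finite ι] : Finite (elimIdx ι β) := by
  unfold elimIdx; infer_instance

noncomputable instance elimIdx.fintype (ι : Type) (β : ι → ℝ) [Fintype ι] :
    Fintype (elimIdx ι β) := Fintype.ofFinite _

def elimA {ι : Type} {m : ℕ} (β : ι → ℝ) (a : ι → Fin m → ℝ) : elimIdx ι β → Fin m → ℝ
  | Sum.inl i => a i.1
  | Sum.inr (i, j) => fun s => β i.1 * a j.1 s - β j.1 * a i.1 s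

def elimL {ι : Type} (β : ι → ℝ) (b : ι → ℝ) : elimIdx ι β → ℝ
  | Sum.inl i => b i.1
  | Sum.inr (i, j) => β i.1 * b j.1 - β j.1 * b i.1

@[simp] lemma elimA_inl {ι : Type} {m : ℕ} (β : ι → ℝ) (a : ι → Fin m → ℝ) (i) :
    elimA β a (Sum.inl i) = a i.1 := rfl
@[simp] lemma elimA_inr {ι : Type} {m : ℕ} (β : ι → ℝ) (a : ι → Fin m → ℝ) (i j) :
    elimA β a (Sum.inr (i, j)) = fun s => β i.1 * a j.1 s - β j.1 * a i.1 s := rfl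
@[simp] lemma elimL_inl {ι : Type} (β : ι → ℝ) (b : ι → ℝ) (i) :
    elimL β b (Sum.inl i) = b i.1 := rfl
@[simp] lemma elimL_inr {ι : Type} (β : ι → ℝ) (b : ι → ℝ) (i j) :
    elimL β b (Sum.inr (i, j)) = β i.1 * b j.1 - β j.1 * b i.1 := rfl

lemma dot_comb {ι : Type} {m : ℕ} (β : ι → ℝ) (a : ι → Fin m → ℝ) (i j : ι) (z : Fin m → ℝ) :
    dot (fun s => β i * a j s - β j * a i s) z = β i * dot (a j) z - β j * dot (a i) z := by
  simp [dot, sub_mul, Finset.sum_sub_distrib, Finset.mul_sum, mul_assoc]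

lemma dot_split {ι : Type} {m : ℕ} (A : ι → Fin (m+1) → ℝ) (i : ι) (y : Fin (m+1) → ℝ) :
    dot (A i) y = dot (Fin.init (A i)) (Fin.init y) + A i (Fin.last m) * y (Fin.last m) := by
  simp [dot, Fin.sum_univ_castSucc, Fin.init]


/-- Hoffman/Walkup–Wets lemma: uniform Lipschitz dependence of polyhedral
feasible sets on the right-hand side, by Fourier–Motzkin induction. -/
lemma hoffman : ∀ (m : ℕ) (ι : Type) [Fintype ι] (A : ι → Fin m → ℝ),
    ∃ C > (0:ℝ), ∀ (b b' : ι → ℝ) (y : Fin m → ℝ),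
      (∀ i, dot (A i) y ≤ b i) → (∃ y₀, ∀ i, dot (A i) y₀ ≤ b' i) →
      ∃ y', (∀ i, dot (A i) y' ≤ b' i) ∧ ‖y' - y‖ ≤ C * ‖b' - b‖ := by
  intro m
  induction m with
  | zero =>
    intro ι _ A
    refine ⟨1, one_pos, fun b b' y hy ⟨y₀, hy₀⟩ => ⟨y₀, hy₀, ?_⟩⟩
    have he : y₀ = y := funext fun j => j.elim0
    rw [he, sub_self, norm_zero]
    positivity
  | succ m IH =>
    intro ι _ A
    set β : ι → ℝ := fun i => A i (Fin.last m) with hβ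
    set a : ι → Fin m → ℝ := fun i => Fin.init (A i) with ha
    have hsplit : ∀ (i : ι) (y : Fin (m+1) → ℝ),
        dot (A i) y = dot (a i) (Fin.init y) + β i * y (Fin.last m) := by
      intro i y; rw [ha, hβ]; exact dot_split A i y
    -- the eliminated system
    obtain ⟨C', hC'pos, hIH⟩ := IH (elimIdx ι β) (elimA β a)
    -- Fourier–Motzkin step 1 : feasible points project to feasible points
    have hFM1 : ∀ (b : ι → ℝ) (y : Fin (m+1) → ℝ), (∀ i, dot (A i) y ≤ b i) →
        ∀ p : elimIdx ι β, dot (elimA β a p) (Fin.init y) ≤ elimL β b p := by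
      intro b y hy p
      rcases p with ⟨i, hi⟩ | ⟨⟨i, hi⟩, ⟨j, hj⟩⟩
      · have h1 := hy i
        rw [hsplit i y, hi] at h1
        simpa using h1
      · have h1 := hy i
        have h2 := hy j
        rw [hsplit i y] at h1
        rw [hsplit j y] at h2
        simp only [elimA_inr, elimL_inr]
        rw [dot_comb]
        have h3 := mul_le_mul_of_nonneg_left h2 hi.le
        have h4 := mul_le_mul_of_nonneg_left h1 (by linarith : (0:ℝ) ≤ -β j)
        nlinarith
    -- Lipschitz constant of the eliminated right-hand side
    obtain ⟨LB, hLBdef⟩ : ∃ LB : ℝ, LB = 1 + ∑ i, 2 * |β i| := ⟨_, rfl⟩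
    have hLB1 : 1 ≤ LB := by
      rw [hLBdef]
      have : (0:ℝ) ≤ ∑ i, 2 * |β i| := Finset.sum_nonneg fun i _ => by positivity
      linarith
    have habs : ∀ i : ι, |β i| ≤ ∑ k, |β k| :=
      fun i => Finset.single_le_sum (f := fun k => |β k|)
        (fun k _ => abs_nonneg _) (Finset.mem_univ i)
    have hsum2 : ∑ i, 2 * |β i| = 2 * ∑ i, |β i| := by rw [Finset.mul_sum]
    have hLlip : ∀ b b' : ι → ℝ, ‖elimL β b' - elimL β b‖ ≤ LB * ‖b' - b‖ := by
      intro b b'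
      refine (pi_norm_le_iff_of_nonneg
        (mul_nonneg (by linarith) (norm_nonneg _))).2 fun p => ?_
      rcases p with ⟨i, hi⟩ | ⟨⟨i, hi⟩, ⟨j, hj⟩⟩
      · have h1 : ‖(elimL β b' - elimL β b) (Sum.inl ⟨i, hi⟩)‖ = |b' i - b i| := by
          simp [Real.norm_eq_abs]
          rfl
        rw [h1]
        have h2 : |b' i - b i| ≤ ‖b' - b‖ := by
          have := norm_le_pi_norm (b' - b) i
          simpa [Real.norm_eq_abs] using this
        calc |b' i - b i| ≤ ‖b' - b‖ := h2
          _ ≤ LB * ‖b' - b‖ := le_mul_of_one_le_left (norm_nonneg _) hLB1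
      · have h1 : (elimL β b' - elimL β b) (Sum.inr (⟨i, hi⟩, ⟨j, hj⟩)) =
            β i * (b' j - b j) - β j * (b' i - b i) := by
          change β i * b' j - β j * b' i - (β i * b j - β j * b i) = _
          ring
        rw [Real.norm_eq_abs, h1]
        have h2 : |b' j - b j| ≤ ‖b' - b‖ := by
          have := norm_le_pi_norm (b' - b) j
          simpa [Real.norm_eq_abs] using this
        have h3 : |b' i - b i| ≤ ‖b' - b‖ := by
          have := norm_le_pi_norm (b' - b) i
          simpa [Real.norm_eq_abs] using this
        have h4 : |β i * (b' j - b j) - β j * (b' i - b i)|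
            ≤ |β i| * |b' j - b j| + |β j| * |b' i - b i| := by
          calc |β i * (b' j - b j) - β j * (b' i - b i)|
              ≤ |β i * (b' j - b j)| + |β j * (b' i - b i)| := abs_sub _ _
            _ = |β i| * |b' j - b j| + |β j| * |b' i - b i| := by rw [abs_mul, abs_mul]
        have h5 : |β i| + |β j| ≤ LB := by
          have hi' := habs i
          have hj' := habs j
          have hnn : (0:ℝ) ≤ ∑ k, |β k| :=
            Finset.sum_nonneg fun k _ => abs_nonneg _
          rw [hLBdef, hsum2]
          linarith
        have hbn : (0:ℝ) ≤ ‖b' - b‖ := norm_nonneg _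
        nlinarith [abs_nonneg (β i), abs_nonneg (β j)]
    -- Lipschitz constant in z of the reduced constraint functions
    obtain ⟨Sa, hSadef⟩ : ∃ Sa : ℝ, Sa = 1 + ∑ i, ∑ j, |a i j| := ⟨_, rfl⟩
    have hSa1 : 1 ≤ Sa := by
      rw [hSadef]
      have : (0:ℝ) ≤ ∑ i, ∑ j, |a i j| :=
        Finset.sum_nonneg fun i _ => Finset.sum_nonneg fun j _ => abs_nonneg _
      linarith
    have hSalip : ∀ (i : ι) (z z' : Fin m → ℝ),
        |dot (a i) z' - dot (a i) z| ≤ Sa * ‖z' - z‖ := by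
      intro i z z'
      refine (abs_dot_sub_dot_le (a i) z' z).trans ?_
      refine mul_le_mul_of_nonneg_right ?_ (norm_nonneg _)
      have h1 : ∑ j, |a i j| ≤ ∑ k, ∑ j, |a k j| :=
        Finset.single_le_sum (f := fun k => ∑ j, |a k j|)
          (fun k _ => Finset.sum_nonneg fun j _ => abs_nonneg _) (Finset.mem_univ i)
      rw [hSadef]; linarith
    -- 1-D Hoffman for the last variable
    obtain ⟨c, hcpos, h1d⟩ := onedim_hoffman β
    refine ⟨C' * LB + c * (1 + Sa * (C' * LB)) + 1, ?_, ?_⟩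
    · have h1 : 0 ≤ C' * LB := mul_nonneg hC'pos.le (by linarith)
      have h2 : 0 ≤ c * (1 + Sa * (C' * LB)) :=
        mul_nonneg hcpos.le (by nlinarith)
      linarith
    intro b b' y hy ⟨y₀, hy₀⟩
    have hz := hFM1 b y hy
    have hz₀ := hFM1 b' y₀ hy₀
    obtain ⟨z', hz', hznorm⟩ := hIH (elimL β b) (elimL β b') (Fin.init y) hz ⟨Fin.init y₀, hz₀⟩
    have hznorm2 : ‖z' - Fin.init y‖ ≤ C' * LB * ‖b' - b‖ := by
      calc ‖z' - Fin.init y‖ ≤ C' * ‖elimL β b' - elimL β b‖ := hznorm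
        _ ≤ C' * (LB * ‖b' - b‖) := mul_le_mul_of_nonneg_left (hLlip b b') hC'pos.le
        _ = C' * LB * ‖b' - b‖ := by ring
    -- the 1-D system at z'
    obtain ⟨t₀, ht₀⟩ : ∃ t₀, ∀ i, β i * t₀ ≤ b' i - dot (a i) z' := by
      refine onedim_feasible β (fun i => b' i - dot (a i) z') ?_ ?_
      · intro i hi
        have h1 := hz' (Sum.inl ⟨i, hi⟩)
        simp only [elimA_inl, elimL_inl] at h1
        linarith
      · intro i j hi hj
        have h1 := hz' (Sum.inr (⟨i, hi⟩, ⟨j, hj⟩))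
        simp only [elimA_inr, elimL_inr] at h1
        rw [dot_comb] at h1
        nlinarith
    have hres : ∀ i, β i * (y (Fin.last m)) ≤ (b' i - dot (a i) z') +
        (‖b' - b‖ + Sa * ‖z' - Fin.init y‖) := by
      intro i
      have h1 := hy i
      rw [hsplit i y] at h1
      have h2 : b i - b' i ≤ ‖b' - b‖ := by
        have h3 := norm_le_pi_norm (b' - b) i
        rw [Pi.sub_apply, Real.norm_eq_abs] at h3
        have := abs_sub_comm (b' i) (b i)
        have h4 : b i - b' i ≤ |b i - b' i| := le_abs_self _
        linarith [(le_abs_self (b i - b' i))]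
      have h3 : dot (a i) z' - dot (a i) (Fin.init y) ≤ Sa * ‖z' - Fin.init y‖ := by
        have h4 := hSalip i (Fin.init y) z'
        exact (le_abs_self _).trans h4
      linarith
    have hεnn : 0 ≤ ‖b' - b‖ + Sa * ‖z' - Fin.init y‖ := by
      have := norm_nonneg (b' - b)
      have := norm_nonneg (z' - Fin.init y)
      nlinarith
    obtain ⟨t', ht', htdist⟩ := h1d (fun i => b' i - dot (a i) z') (y (Fin.last m))
      (‖b' - b‖ + Sa * ‖z' - Fin.init y‖) hεnn ⟨t₀, ht₀⟩ hres
    refine ⟨Fin.snoc z' t', fun i => ?_, ?_⟩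
    · rw [hsplit i (Fin.snoc z' t'), Fin.init_snoc, Fin.snoc_last]
      have h6 : β i * t' ≤ b' i - dot (a i) z' := ht' i
      linarith
    · have hcomp : ∀ j : Fin (m+1),
          ‖((Fin.snoc z' t' : Fin (m+1) → ℝ) - y) j‖ ≤ max ‖z' - Fin.init y‖ |t' - y (Fin.last m)| := by
        intro j
        refine Fin.lastCases ?_ ?_ j
        · have h1 : ((Fin.snoc z' t' : Fin (m+1) → ℝ) - y) (Fin.last m) = t' - y (Fin.last m) := by
            simp [Pi.sub_apply, Fin.snoc_last]
          rw [h1, Real.norm_eq_abs]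
          exact le_max_right _ _
        · intro s
          have h1 : ((Fin.snoc z' t' : Fin (m+1) → ℝ) - y) s.castSucc = (z' - Fin.init y) s := by
            simp [Pi.sub_apply, Fin.snoc_castSucc, Fin.init]
          rw [h1]
          exact (norm_le_pi_norm (z' - Fin.init y) s).trans (le_max_left _ _)
      have hmaxnn : 0 ≤ max ‖z' - Fin.init y‖ |t' - y (Fin.last m)| :=
        le_trans (norm_nonneg _) (le_max_left _ _)
      have hn1 : ‖(Fin.snoc z' t' : Fin (m+1) → ℝ) - y‖ ≤ max ‖z' - Fin.init y‖ |t' - y (Fin.last m)| :=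
        (pi_norm_le_iff_of_nonneg hmaxnn).2 hcomp
      have hbn : (0:ℝ) ≤ ‖b' - b‖ := norm_nonneg _
      have htb : |t' - y (Fin.last m)| ≤ c * (1 + Sa * (C' * LB)) * ‖b' - b‖ := by
        have h1 : ‖b' - b‖ + Sa * ‖z' - Fin.init y‖
            ≤ (1 + Sa * (C' * LB)) * ‖b' - b‖ := by nlinarith [norm_nonneg (z' - Fin.init y)]
        calc |t' - y (Fin.last m)| ≤ c * (‖b' - b‖ + Sa * ‖z' - Fin.init y‖) := htdist
          _ ≤ c * ((1 + Sa * (C' * LB)) * ‖b' - b‖) :=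
            mul_le_mul_of_nonneg_left h1 hcpos.le
          _ = c * (1 + Sa * (C' * LB)) * ‖b' - b‖ := by ring
      refine hn1.trans (max_le ?_ ?_)
      · calc ‖z' - Fin.init y‖ ≤ C' * LB * ‖b' - b‖ := hznorm2
          _ ≤ (C' * LB + c * (1 + Sa * (C' * LB)) + 1) * ‖b' - b‖ := by
            refine mul_le_mul_of_nonneg_right ?_ hbn
            have hq : (0:ℝ) ≤ C' * LB := mul_nonneg hC'pos.le (by linarith)
            have hq2 : (0:ℝ) ≤ c * (1 + Sa * (C' * LB)) :=
              mul_nonneg hcpos.le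
                (by nlinarith [mul_nonneg (by linarith : (0:ℝ) ≤ Sa) hq])
            linarith
      · calc |t' - y (Fin.last m)| ≤ c * (1 + Sa * (C' * LB)) * ‖b' - b‖ := htb
          _ ≤ (C' * LB + c * (1 + Sa * (C' * LB)) + 1) * ‖b' - b‖ := by
            refine mul_le_mul_of_nonneg_right ?_ hbn
            have hq : (0:ℝ) ≤ C' * LB := mul_nonneg hC'pos.le (by linarith)
            have hq2 : (0:ℝ) ≤ c * (1 + Sa * (C' * LB)) :=
              mul_nonneg hcpos.le
                (by nlinarith [mul_nonneg (by linarith : (0:ℝ) ≤ Sa) hq])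
            linarith


lemma euclid_norm_le {d : ℕ} (v : EuclideanSpace ℝ (Fin d)) :
    ‖v‖ ≤ Real.sqrt d * ‖(fun j => v j : Fin d → ℝ)‖ := by
  rw [EuclideanSpace.norm_eq]
  obtain ⟨s, hsdef⟩ : ∃ s, s = ‖(fun j => v j : Fin d → ℝ)‖ := ⟨_, rfl⟩
  rw [← hsdef]
  have hs : 0 ≤ s := hsdef ▸ norm_nonneg _
  have h1 : ∑ i, ‖v i‖ ^ 2 ≤ (d : ℝ) * s ^ 2 := by
    calc ∑ i, ‖v i‖ ^ 2 ≤ ∑ _i : Fin d, s ^ 2 := by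
          refine Finset.sum_le_sum fun i _ => ?_
          have h2 : ‖v i‖ ≤ s := by
            rw [hsdef]
            exact norm_le_pi_norm (fun j => v j : Fin d → ℝ) i
          have : (0:ℝ) ≤ ‖v i‖ := norm_nonneg _
          nlinarith
      _ = (d : ℝ) * s ^ 2 := by simp [Finset.sum_const, nsmul_eq_mul]
  calc Real.sqrt (∑ i, ‖v i‖ ^ 2) ≤ Real.sqrt ((d : ℝ) * s ^ 2) := Real.sqrt_le_sqrt h1
    _ = Real.sqrt d * s := by
        rw [Real.sqrt_mul (by positivity) (s ^ 2), Real.sqrt_sq hs]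

/-- Lipschitz behaviour of slices of a convex polyhedron (Walkup–Wets). -/
lemma slice_lipschitz {d : ℕ}
    {P : Set (EuclideanSpace ℝ (Fin d) × EuclideanSpace ℝ (Fin d))} (hP : IsPolyhedron P) :
    ∃ κ > (0:ℝ), ∀ x z y w, (x, z) ∈ P → (y, w) ∈ P →
      ∃ w', (x, w') ∈ P ∧ ‖w - w'‖ ≤ κ * ‖y - x‖ := by
  classical
  obtain ⟨k, f, c, rfl⟩ := hP
  set E := EuclideanSpace ℝ (Fin d)
  set g : Fin k → (E →ₗ[ℝ] ℝ) := fun i => (f i).comp (LinearMap.inr ℝ E E) with hgdef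
  set h : Fin k → (E →ₗ[ℝ] ℝ) := fun i => (f i).comp (LinearMap.inl ℝ E E) with hhdef
  have hfsplit : ∀ (i : Fin k) (u v : E), f i (u, v) = h i u + g i v := by
    intro i u v
    have e1 : ((u, v) : E × E) = (u, 0) + ((0 : E), v) := by simp
    rw [e1, map_add]
    rfl
  set A : Fin k → Fin d → ℝ := fun i j => g i (EuclideanSpace.single j 1) with hAdef
  have hg : ∀ (i : Fin k) (v : E), g i v = dot (A i) (fun j => v j) := by
    intro i v
    conv_lhs => rw [← (EuclideanSpace.basisFun (Fin d) ℝ).sum_repr v]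
    rw [map_sum]
    simp only [map_smul, EuclideanSpace.basisFun_repr, EuclideanSpace.basisFun_apply,
      smul_eq_mul, dot, hAdef]
    exact Finset.sum_congr rfl fun j _ => by ring
  set N : ℝ := 1 + ∑ i, ‖LinearMap.toContinuousLinearMap (h i)‖ with hNdef
  have hN1 : 1 ≤ N := by
    rw [hNdef]
    have : (0:ℝ) ≤ ∑ i, ‖LinearMap.toContinuousLinearMap (h i)‖ :=
      Finset.sum_nonneg fun i _ => norm_nonneg _
    linarith
  have hhlip : ∀ (i : Fin k) (u u' : E), |h i u' - h i u| ≤ N * ‖u' - u‖ := by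
    intro i u u'
    have e1 : h i u' - h i u = h i (u' - u) := by rw [map_sub]
    rw [e1]
    have h2 := (LinearMap.toContinuousLinearMap (h i)).le_opNorm (u' - u)
    have h3 : ‖LinearMap.toContinuousLinearMap (h i)‖ ≤ N := by
      rw [hNdef]
      have := Finset.single_le_sum
        (f := fun i => ‖LinearMap.toContinuousLinearMap (h i)‖)
        (fun i _ => norm_nonneg _) (Finset.mem_univ i)
      linarith
    have h4 : ‖h i (u' - u)‖ ≤ N * ‖u' - u‖ := by
      refine h2.trans ?_
      exact mul_le_mul_of_nonneg_right h3 (norm_nonneg _)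
    simpa [Real.norm_eq_abs] using h4
  obtain ⟨C, hCpos, hHoff⟩ := hoffman d (Fin k) A
  refine ⟨Real.sqrt d * C * N + 1, ?_, ?_⟩
  · have h1 : (0:ℝ) ≤ Real.sqrt d * C * N := by positivity
    linarith
  intro x z y w hxz hyw
  have hfeas : ∀ (u v : E),
      ((u, v) ∈ {p : E × E | ∀ i, f i p ≤ c i}) ↔
        ∀ i, dot (A i) (fun j => v j) ≤ c i - h i u := by
    intro u v
    constructor
    · intro hm i
      have := hm i
      rw [hfsplit i u v, hg i v] at this
      linarith
    · intro hm i
      rw [Set.mem_setOf_eq] at *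
      rw [hfsplit i u v, hg i v]
      have := hm i
      linarith
  obtain ⟨w'', hw''feas, hw''norm⟩ := hHoff (fun i => c i - h i y) (fun i => c i - h i x)
    (fun j => w j) (by
      intro i
      exact ((hfeas y w).1 hyw) i)
    ⟨fun j => z j, by
      intro i
      exact ((hfeas x z).1 hxz) i⟩
  set w' : E := (WithLp.equiv 2 (Fin d → ℝ)).symm w'' with hw'def
  have hw'eq : (fun j => w' j : Fin d → ℝ) = w'' := by
    funext j
    rfl
  refine ⟨w', ?_, ?_⟩
  · refine (hfeas x w').2 ?_
    rw [hw'eq]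
    exact hw''feas
  · have hb : ‖(fun i => c i - h i x : Fin k → ℝ) - (fun i => c i - h i y)‖
        ≤ N * ‖y - x‖ := by
      refine (pi_norm_le_iff_of_nonneg
        (mul_nonneg (by linarith) (norm_nonneg _))).2 fun i => ?_
      have e1 : ((fun i => c i - h i x : Fin k → ℝ) - (fun i => c i - h i y)) i
          = h i y - h i x := by
        simp [Pi.sub_apply]
      rw [e1, Real.norm_eq_abs]
      exact hhlip i x y
    have h2 : ‖w - w'‖ ≤ Real.sqrt d * ‖(fun j => (w - w') j : Fin d → ℝ)‖ :=
      euclid_norm_le (w - w')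
    have e2 : (fun j => (w - w') j : Fin d → ℝ) = (fun j => w j) - w'' := by
      funext j
      rw [← hw'eq]
      exact PiLp.sub_apply (x := w) (y := w') (i := j)
    have h3 : ‖(fun j => w j : Fin d → ℝ) - w''‖ ≤ C * (N * ‖y - x‖) := by
      have := hw''norm
      rw [norm_sub_rev] at this
      refine this.trans ?_
      exact mul_le_mul_of_nonneg_left hb hCpos.le
    have hsd : (0:ℝ) ≤ Real.sqrt d := Real.sqrt_nonneg _
    have hyx : (0:ℝ) ≤ ‖y - x‖ := norm_nonneg _
    calc ‖w - w'‖ ≤ Real.sqrt d * ‖(fun j => (w - w') j : Fin d → ℝ)‖ := h2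
      _ ≤ Real.sqrt d * (C * (N * ‖y - x‖)) := by
          rw [e2]
          exact mul_le_mul_of_nonneg_left h3 hsd
      _ = Real.sqrt d * C * N * ‖y - x‖ := by ring
      _ ≤ (Real.sqrt d * C * N + 1) * ‖y - x‖ := by nlinarith


/-- The domain of a polyhedral relation is closed. -/
lemma dom_closed {d : ℕ}
    {P : Set (EuclideanSpace ℝ (Fin d) × EuclideanSpace ℝ (Fin d))} (hP : IsPolyhedron P) :
    IsClosed {u : EuclideanSpace ℝ (Fin d) | ∃ v, (u, v) ∈ P} := by
  classical
  have hPc : IsClosed P := by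
    obtain ⟨k, f, c, rfl⟩ := hP
    have : {p : EuclideanSpace ℝ (Fin d) × EuclideanSpace ℝ (Fin d) | ∀ i, f i p ≤ c i}
        = ⋂ i, {p | f i p ≤ c i} := by
      ext p
      simp [Set.mem_iInter]
    rw [this]
    refine isClosed_iInter fun i => ?_
    exact isClosed_le (f i).continuous_of_finiteDimensional continuous_const
  obtain ⟨κ, hκpos, hsl⟩ := slice_lipschitz hP
  refine IsSeqClosed.isClosed ?_
  intro u p hu hup
  obtain ⟨z₀, hz₀⟩ := hu 0
  choose v hv using hu
  have hpts : ∀ n, ∃ w', (u n, w') ∈ P ∧ ‖z₀ - w'‖ ≤ κ * ‖u 0 - u n‖ :=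
    fun n => hsl (u n) (v n) (u 0) z₀ (hv n) hz₀
  choose w hw1 hw2 using hpts
  obtain ⟨R, hR⟩ := (Metric.isBounded_range_of_tendsto u hup).subset_closedBall 0
  have hRmem : ∀ n, ‖u n‖ ≤ R := by
    intro n
    have := hR (Set.mem_range_self n)
    simpa [Metric.mem_closedBall, dist_eq_norm] using this
  obtain ⟨D, hDdef⟩ : ∃ D : ℝ, D = ‖z₀‖ + κ * (‖u 0‖ + R) := ⟨_, rfl⟩
  have hwD : ∀ n, w n ∈ Metric.closedBall (0 : EuclideanSpace ℝ (Fin d)) D := by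
    intro n
    rw [Metric.mem_closedBall, dist_eq_norm, sub_zero, hDdef]
    have h1 : ‖w n‖ ≤ ‖z₀‖ + ‖z₀ - w n‖ := by
      have := norm_sub_norm_le z₀ (w n)
      have h2 := norm_sub_rev z₀ (w n)
      calc ‖w n‖ = ‖z₀ - (z₀ - w n)‖ := by rw [sub_sub_cancel]
        _ ≤ ‖z₀‖ + ‖z₀ - w n‖ := norm_sub_le _ _
    have h3 : ‖u 0 - u n‖ ≤ ‖u 0‖ + R := by
      refine (norm_sub_le _ _).trans ?_
      have := hRmem n
      linarith
    have h4 := hw2 n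
    have h5 : κ * ‖u 0 - u n‖ ≤ κ * (‖u 0‖ + R) :=
      mul_le_mul_of_nonneg_left h3 hκpos.le
    linarith
  obtain ⟨aa, -, φ, hφ, ha⟩ :=
    tendsto_subseq_of_bounded Metric.isBounded_closedBall hwD
  have hlim : Filter.Tendsto (fun n => (u (φ n), w (φ n))) Filter.atTop (nhds (p, aa)) :=
    Filter.Tendsto.prodMk_nhds (hup.comp hφ.tendsto_atTop) ha
  refine ⟨aa, hPc.mem_of_tendsto hlim ?_⟩
  filter_upwards with n
  exact hw1 (φ n)

end RobinsonAux

/-- Robinson: a piecewise polyhedral set-valued mapping is locally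
upper Lipschitz continuous everywhere with a uniform modulus `κ`. -/
theorem piecewise_polyhedral_upper_lipschitz {d : ℕ}
    (F : EuclideanSpace ℝ (Fin d) → Set (EuclideanSpace ℝ (Fin d)))
    (ι : Type) (hι : Fintype ι)
    (P : ι → Set (EuclideanSpace ℝ (Fin d) × EuclideanSpace ℝ (Fin d)))
    (hP : ∀ i, IsPolyhedron (P i))
    (hgraph : {p : EuclideanSpace ℝ (Fin d) × EuclideanSpace ℝ (Fin d) | p.2 ∈ F p.1} =
      ⋃ i, P i) :
    ∃ κ > (0 : ℝ), ∀ x : EuclideanSpace ℝ (Fin d), ∃ U ∈ nhds x, ∀ y ∈ U,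
      F y ⊆ {z | ∃ w ∈ F x, ‖z - w‖ ≤ κ * ‖y - x‖} := by
  classical
  letI := hι
  choose κs hκspos hκs using fun i => RobinsonAux.slice_lipschitz (hP i)
  obtain ⟨κ, hκdef⟩ : ∃ κ : ℝ, κ = 1 + ∑ i, κs i := ⟨_, rfl⟩
  have hκsnn : (0:ℝ) ≤ ∑ i, κs i := Finset.sum_nonneg fun i _ => (hκspos i).le
  have hκpos : 0 < κ := by rw [hκdef]; linarith
  have hκge : ∀ i, κs i ≤ κ := by
    intro i
    have := Finset.single_le_sum (f := κs) (fun j _ => (hκspos j).le) (Finset.mem_univ i)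
    rw [hκdef]
    linarith
  refine ⟨κ, hκpos, fun x => ?_⟩
  set dom : ι → Set (EuclideanSpace ℝ (Fin d)) := fun i => {u | ∃ v, (u, v) ∈ P i} with hdom
  set bad : Finset ι := Finset.univ.filter (fun i => x ∉ dom i) with hbad
  refine ⟨⋂ i ∈ bad, (dom i)ᶜ, ?_, ?_⟩
  · refine (Filter.biInter_finset_mem bad).2 fun i hi => ?_
    have hcl : IsClosed (dom i) := RobinsonAux.dom_closed (hP i)
    refine hcl.isOpen_compl.mem_nhds ?_
    exact (Finset.mem_filter.1 hi).2
  · intro y hy v hv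
    have hmem : (y, v) ∈ ⋃ i, P i := by
      rw [← hgraph]
      exact hv
    obtain ⟨i, hvi⟩ := Set.mem_iUnion.1 hmem
    have hxdom : x ∈ dom i := by
      by_contra hxd
      have hibad : i ∈ bad := Finset.mem_filter.2 ⟨Finset.mem_univ i, hxd⟩
      have hyc := Set.mem_iInter₂.1 hy i hibad
      exact hyc ⟨v, hvi⟩
    obtain ⟨z, hz⟩ := hxdom
    obtain ⟨w', hw'mem, hw'norm⟩ := hκs i x z y v hz hvi
    have hw'F : w' ∈ F x := by
      have : (x, w') ∈ ⋃ j, P j := Set.mem_iUnion.2 ⟨i, hw'mem⟩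
      rw [← hgraph] at this
      exact this
    refine ⟨w', hw'F, ?_⟩
    refine hw'norm.trans ?_
    exact mul_le_mul_of_nonneg_right (hκge i) (norm_nonneg _)
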